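/- Let ξ ∈ [0,1]ⁿ with Σᵢ ξᵢ = c ∈ ℕ. Define, for each i, sᵢ = Σ_{j<i} ξⱼ and tᵢ = sᵢ + ξᵢ. For z ∈ [0,1), let x(z) ∈ {0,1}ⁿ be given by x(z)ᵢ = 1 iff there exists an integer ℓ with 0 ≤ ℓ < c such that ℓ + z ∈ [sᵢ, tᵢ). Then for every z, Σᵢ x(z)ᵢ = c, and if z is uniform on [0,1), then P[x(z)ᵢ = 1] = ξᵢ for every i. -/

import Mathlib

open Finset MeasureTheory
open scoped Classical

/-- Correctness of the space-filling placement algorithm: with partial sums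
sᵢ = Σ_{j<i} ξⱼ and tᵢ = sᵢ + ξᵢ, every cut z ∈ [0,1) selects exactly c items,
and a uniform cut selects item i with probability ξᵢ. -/
theorem space_filling_placement {n : ℕ} (c : ℕ) (ξ : Fin n → ℝ)
    (hξ : ∀ i, ξ i ∈ Set.Icc (0 : ℝ) 1)
    (hsum : (∑ i, ξ i) = (c : ℝ)) :
    let s : Fin n → ℝ := fun i => ∑ j ∈ Finset.univ.filter (fun j => j < i), ξ j
    let t : Fin n → ℝ := fun i => s i + ξ i
    (∀ z : ℝ, z ∈ Set.Ico (0 : ℝ) 1 →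
      (∑ i, (if ∃ ℓ : ℕ, ℓ < c ∧ ((ℓ : ℝ) + z) ∈ Set.Ico (s i) (t i)
              then (1 : ℕ) else 0)) = c) ∧
    (∀ i : Fin n,
      volume {z : ℝ | z ∈ Set.Ico (0 : ℝ) 1 ∧
          ∃ ℓ : ℕ, ℓ < c ∧ ((ℓ : ℝ) + z) ∈ Set.Ico (s i) (t i)} =
        ENNReal.ofReal (ξ i)) := by
  intro s t
  have hξ0 : ∀ i, 0 ≤ ξ i := fun i => (hξ i).1
  have hξ1 : ∀ i, ξ i ≤ 1 := fun i => (hξ i).2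
  have hs0 : ∀ i, 0 ≤ s i := fun i => Finset.sum_nonneg (fun j _ => hξ0 j)
  have hst : ∀ i, s i ≤ t i := fun i => le_add_of_nonneg_right (hξ0 i)
  have hins : ∀ i : Fin n, t i = ∑ k ∈ insert i (univ.filter (fun k => k < i)), ξ k := by
    intro i
    rw [Finset.sum_insert (by simp)]
    show s i + ξ i = _
    ring
  have hts : ∀ i j : Fin n, i < j → t i ≤ s j := by
    intro i j hij
    have hsub : insert i (univ.filter (fun k => k < i)) ⊆ univ.filter (fun k => k < j) := by
      intro k hk
      simp only [Finset.mem_insert, Finset.mem_filter, Finset.mem_univ, true_and] at *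
      rcases hk with rfl | hk
      · exact hij
      · exact hk.trans hij
    rw [hins i]
    exact Finset.sum_le_sum_of_subset_of_nonneg hsub (fun k _ _ => hξ0 k)
  have htc : ∀ i, t i ≤ c := by
    intro i
    rw [hins i, ← hsum]
    exact Finset.sum_le_sum_of_subset_of_nonneg (Finset.subset_univ _) (fun k _ _ => hξ0 k)
  have hsc : ∀ i, s i ≤ c := fun i => (hst i).trans (htc i)
  -- uniqueness of ℓ
  have huniqℓ : ∀ (i : Fin n) (z : ℝ) (ℓ ℓ' : ℕ),
      ((ℓ : ℝ) + z) ∈ Set.Ico (s i) (t i) → ((ℓ' : ℝ) + z) ∈ Set.Ico (s i) (t i) → ℓ = ℓ' := by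
    intro i z ℓ ℓ' h h'
    have h1 := hξ1 i
    have ht : t i = s i + ξ i := rfl
    have hb1 := h.2
    have hb2 := h'.1
    have hb3 := h'.2
    have hb4 := h.1
    rw [ht] at hb1 hb3
    have e1 : (ℓ : ℝ) < ℓ' + 1 := by linarith
    have e2 : (ℓ' : ℝ) < ℓ + 1 := by linarith
    have e1' : ℓ < ℓ' + 1 := by exact_mod_cast e1
    have e2' : ℓ' < ℓ + 1 := by exact_mod_cast e2
    omega
  -- coverage: each y ∈ [0, c) lies in exactly one interval
  have hcover : ∀ y : ℝ, 0 ≤ y → y < c → ∃! i : Fin n, s i ≤ y ∧ y < t i := by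
    intro y hy0 hyc
    have hn : 0 < n := by
      rcases Nat.eq_zero_or_pos n with h | h
      · subst h
        simp only [Finset.univ_eq_empty, Finset.sum_empty] at hsum
        rw [← hsum] at hyc
        linarith
      · exact h
    have hFne : (univ.filter (fun i : Fin n => y < t i)).Nonempty := by
      refine ⟨⟨n - 1, by omega⟩, ?_⟩
      simp only [Finset.mem_filter, Finset.mem_univ, true_and]
      have hset : insert (⟨n - 1, by omega⟩ : Fin n)
          (univ.filter (fun k => k < (⟨n - 1, by omega⟩ : Fin n))) = univ := by
        ext k
        simp only [Finset.mem_insert, Finset.mem_filter, Finset.mem_univ, true_and, iff_true]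
        rcases eq_or_ne k ⟨n - 1, by omega⟩ with h | h
        · exact Or.inl h
        · right
          rw [Fin.lt_def]
          have h1 := k.isLt
          have h2 : k.val ≠ n - 1 := fun hh => h (Fin.ext hh)
          simp only []
          omega
      have hteq : t ⟨n - 1, by omega⟩ = (c : ℝ) := by
        rw [hins, hset, hsum]
      rw [hteq]; exact hyc
    set F := univ.filter (fun i : Fin n => y < t i) with hF
    have hi₀F : F.min' hFne ∈ F := F.min'_mem hFne
    set i₀ := F.min' hFne with hi₀def
    have hi₀t : y < t i₀ := (Finset.mem_filter.mp hi₀F).2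
    have hmin : ∀ j : Fin n, y < t j → i₀ ≤ j := fun j hj =>
      F.min'_le j (Finset.mem_filter.mpr ⟨Finset.mem_univ _, hj⟩)
    have hi₀s : s i₀ ≤ y := by
      by_contra h
      push_neg at h
      have hpos : 0 < i₀.val := by
        by_contra h0
        push_neg at h0
        have hz : s i₀ = 0 := by
          show ∑ j ∈ univ.filter (fun j => j < i₀), ξ j = 0
          apply Finset.sum_eq_zero
          intro j hj
          have hjlt : j < i₀ := (Finset.mem_filter.mp hj).2
          rw [Fin.lt_def] at hjlt
          omega
        linarith
      set i' : Fin n := ⟨i₀.val - 1, by omega⟩ with hi'def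
      have hii' : i' < i₀ := by rw [Fin.lt_def]; show i₀.val - 1 < i₀.val; omega
      have hti' : t i' = s i₀ := by
        rw [hins]
        show _ = ∑ j ∈ univ.filter (fun j => j < i₀), ξ j
        congr 1
        ext k
        simp only [Finset.mem_insert, Finset.mem_filter, Finset.mem_univ, true_and]
        rw [Fin.lt_def, Fin.lt_def]
        constructor
        · rintro (rfl | hk)
          · omega
          · omega
        · intro hk
          rcases eq_or_ne k i' with rfl | hne
          · exact Or.inl rfl
          · right
            have : k.val ≠ i₀.val - 1 := fun hh => hne (Fin.ext hh)
            show k.val < i₀.val - 1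
            omega
      have : i₀ ≤ i' := hmin i' (by rw [hti']; exact h)
      exact absurd hii' (not_lt.mpr this)
    refine ⟨i₀, ⟨hi₀s, hi₀t⟩, ?_⟩
    intro j hj
    by_contra hne
    rcases lt_or_gt_of_ne hne with hlt | hlt
    · have := hts j i₀ hlt
      linarith [hj.2, hi₀s]
    · have := hts i₀ j hlt
      linarith [hj.1, hi₀t]
  constructor
  · -- part 1
    intro z hz
    have key : ∀ i : Fin n,
        (if ∃ ℓ : ℕ, ℓ < c ∧ ((ℓ : ℝ) + z) ∈ Set.Ico (s i) (t i) then (1 : ℕ) else 0)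
          = ∑ ℓ ∈ Finset.range c,
              if ((ℓ : ℝ) + z) ∈ Set.Ico (s i) (t i) then (1 : ℕ) else 0 := by
      intro i
      by_cases h : ∃ ℓ : ℕ, ℓ < c ∧ ((ℓ : ℝ) + z) ∈ Set.Ico (s i) (t i)
      · obtain ⟨ℓ, hℓc, hℓ⟩ := h
        rw [if_pos ⟨ℓ, hℓc, hℓ⟩, Finset.sum_eq_single ℓ]
        · rw [if_pos hℓ]
        · intro b _ hbℓ
          rw [if_neg]
          intro hb'
          exact hbℓ (huniqℓ i z b ℓ hb' hℓ)
        · intro hℓ'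
          exact absurd (Finset.mem_range.mpr hℓc) hℓ'
      · rw [if_neg h, Finset.sum_eq_zero]
        intro ℓ hℓ
        rw [if_neg]
        intro h'
        exact h ⟨ℓ, Finset.mem_range.mp hℓ, h'⟩
    rw [Finset.sum_congr rfl (fun i _ => key i), Finset.sum_comm]
    have key2 : ∀ ℓ ∈ Finset.range c,
        (∑ i : Fin n, if ((ℓ : ℝ) + z) ∈ Set.Ico (s i) (t i) then (1 : ℕ) else 0) = 1 := by
      intro ℓ hℓ
      have hℓc := Finset.mem_range.mp hℓ
      have hy0 : (0 : ℝ) ≤ (ℓ : ℝ) + z := by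
        have := hz.1
        positivity
      have hyc : (ℓ : ℝ) + z < c := by
        have h1 : (ℓ : ℝ) + 1 ≤ c := by exact_mod_cast Nat.succ_le_of_lt hℓc
        linarith [hz.2]
      obtain ⟨i₀, hi₀, hiu⟩ := hcover _ hy0 hyc
      rw [Finset.sum_eq_single i₀]
      · rw [if_pos (Set.mem_Ico.mpr hi₀)]
      · intro b _ hb
        rw [if_neg]
        intro hb'
        exact hb (hiu b (Set.mem_Ico.mp hb'))
      · intro h
        exact absurd (Finset.mem_univ i₀) h
    rw [Finset.sum_congr rfl key2]
    simp
  · -- part 2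
    intro i
    have hEeq : {z : ℝ | z ∈ Set.Ico (0 : ℝ) 1 ∧
          ∃ ℓ : ℕ, ℓ < c ∧ ((ℓ : ℝ) + z) ∈ Set.Ico (s i) (t i)}
        = ⋃ ℓ ∈ Finset.range c, Set.Ico (max (s i - ℓ) 0) (min (t i - ℓ) 1) := by
      ext z
      simp only [Set.mem_setOf_eq, Set.mem_iUnion, Finset.mem_range, Set.mem_Ico,
        exists_prop, max_le_iff, lt_min_iff]
      constructor
      · rintro ⟨⟨hz0, hz1⟩, ℓ, hℓc, hℓs, hℓt⟩
        exact ⟨ℓ, hℓc, ⟨by linarith, hz0⟩, by linarith, hz1⟩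
      · rintro ⟨ℓ, hℓc, ⟨h1, h2⟩, h3, h4⟩
        exact ⟨⟨h2, h4⟩, ℓ, hℓc, by linarith, by linarith⟩
    rw [hEeq, measure_biUnion_finset]
    · -- sum computation
      set g : ℕ → ℝ := fun m => min (t i) (max (s i) m) with hg
      have hterm : ∀ ℓ ∈ Finset.range c,
          volume (Set.Ico (max (s i - (ℓ : ℝ)) 0) (min (t i - ℓ) 1))
            = ENNReal.ofReal (g (ℓ + 1) - g ℓ) := by
        intro ℓ _
        rw [Real.volume_Ico]
        rcases le_or_gt (t i) (ℓ : ℝ) with hcase | hcase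
        · have hL : min (t i - (ℓ : ℝ)) 1 - max (s i - ℓ) 0 ≤ 0 := by
            have := hst i
            have h1 : min (t i - (ℓ : ℝ)) 1 ≤ t i - ℓ := min_le_left _ _
            have h2 : s i - (ℓ : ℝ) ≤ max (s i - ℓ) 0 := le_max_left _ _
            have h3 : (0 : ℝ) ≤ max (s i - ℓ) 0 := le_max_right _ _
            linarith
          have hg1 : g ℓ = t i := by
            simp only [hg]
            rw [min_eq_left]
            exact le_trans hcase (le_max_right _ _)
          have hg2 : g (ℓ + 1) = t i := by
            simp only [hg]
            rw [min_eq_left]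
            refine le_trans ?_ (le_max_right _ _)
            push_cast
            linarith
          rw [hg1, hg2]
          simp [ENNReal.ofReal_eq_zero.mpr hL]
        · rcases le_or_gt ((ℓ : ℝ) + 1) (s i) with hcase2 | hcase2
          · have hL : min (t i - (ℓ : ℝ)) 1 - max (s i - ℓ) 0 ≤ 0 := by
              have h1 : min (t i - (ℓ : ℝ)) 1 ≤ 1 := min_le_right _ _
              have h2 : s i - (ℓ : ℝ) ≤ max (s i - ℓ) 0 := le_max_left _ _
              linarith
            have hg1 : g ℓ = s i := by
              simp only [hg]
              rw [max_eq_left (by linarith), min_eq_right (hst i)]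
            have hg2 : g (ℓ + 1) = s i := by
              simp only [hg]
              rw [max_eq_left, min_eq_right (hst i)]
              push_cast
              linarith
            rw [hg1, hg2]
            simp [ENNReal.ofReal_eq_zero.mpr hL]
          · have hg1 : g ℓ = max (s i) ℓ := by
              simp only [hg]
              rw [min_eq_right]
              exact max_le (hst i) (le_of_lt hcase)
            have hg2 : g (ℓ + 1) = min (t i) ((ℓ : ℝ) + 1) := by
              simp only [hg]
              congr 1
              rw [max_eq_right]
              · push_cast; ring
              · push_cast; linarith
            rw [hg1, hg2]
            congr 1
            rcases le_total (t i) ((ℓ : ℝ) + 1) with h | h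
            · rw [min_eq_left h, min_eq_left (by linarith)]
              rcases le_total (s i) (ℓ : ℝ) with h' | h'
              · rw [max_eq_right h', max_eq_right (by linarith)]; ring
              · rw [max_eq_left h', max_eq_left (by linarith)]; ring
            · rw [min_eq_right h, min_eq_right (by linarith)]
              rcases le_total (s i) (ℓ : ℝ) with h' | h'
              · rw [max_eq_right h', max_eq_right (by linarith)]; ring
              · rw [max_eq_left h', max_eq_left (by linarith)]; ring
      rw [Finset.sum_congr rfl hterm]
      have hmono : ∀ ℓ : ℕ, g ℓ ≤ g (ℓ + 1) := by
        intro ℓ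
        apply min_le_min le_rfl
        apply max_le_max le_rfl
        push_cast
        linarith
      rw [← ENNReal.ofReal_sum_of_nonneg (fun ℓ _ => by linarith [hmono ℓ])]
      rw [Finset.sum_range_sub g]
      have hg0 : g 0 = s i := by
        simp only [hg, Nat.cast_zero]
        rw [max_eq_left (hs0 i), min_eq_right (hst i)]
      have hgc : g c = t i := by
        simp only [hg]
        rw [max_eq_right (hsc i), min_eq_left (htc i)]
      rw [hg0, hgc]
      congr 1
      show s i + ξ i - s i = ξ i
      ring
    · -- pairwise disjoint
      intro ℓ hℓ ℓ' hℓ' hne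
      simp only [Finset.coe_range, Set.mem_Iio] at hℓ hℓ'
      refine Set.disjoint_left.mpr ?_
      intro z hz hz'
      simp only [Set.mem_Ico, max_le_iff, lt_min_iff] at hz hz'
      exact hne (huniqℓ i z ℓ ℓ' ⟨by linarith [hz.1.1], by linarith [hz.2.1]⟩
        ⟨by linarith [hz'.1.1], by linarith [hz'.2.1]⟩)
    · intro ℓ _
      exact measurableSet_Ico
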